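/- arXiv:2306.12025 — 4 statements merged into one kernel-verified Lean document; each statement's English description precedes it below -/
import Mathlib

section
/- For 2×2 SPD matrices, any SPD matrix X with distinct eigenvalues has exactly 4 eigen-decompositions (U, D) with U ∈ SO(2) and D diagonal positive-definite; more generally, a p×p SPD matrix with p distinct eigenvalues has exactly 2^(p-1)·p! eigen-decompositions with eigenvector matrix in SO(p). -/
open scoped BigOperators
open Matrix

namespace SR

variable {p : ℕ}

/-- Frobenius norm of a matrix. -/
noncomputable def frobNorm (A : Matrix (Fin p) (Fin p) ℝ) : ℝ :=
  Real.sqrt (∑ i, ∑ j, (A i j) ^ 2)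

/-- `U` is a special orthogonal (rotation) matrix. -/
def IsSO (U : Matrix (Fin p) (Fin p) ℝ) : Prop :=
  U * Uᵀ = 1 ∧ U.det = 1

/-- `D` is diagonal with positive diagonal entries. -/
def IsDiagPos (D : Matrix (Fin p) (Fin p) ℝ) : Prop :=
  D.IsDiag ∧ ∀ i, 0 < D i i

/-- `X` is symmetric positive definite. -/
def IsSPD (X : Matrix (Fin p) (Fin p) ℝ) : Prop :=
  X.IsSymm ∧ X.PosDef

/-- Membership in the eigen-decomposition space `M(p) = SO(p) × Diag⁺(p)`. -/
def IsM (m : Matrix (Fin p) (Fin p) ℝ × Matrix (Fin p) (Fin p) ℝ) : Prop :=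
  IsSO m.1 ∧ IsDiagPos m.2

/-- The eigen-composition map `F(U, D) = U D Uᵀ`. -/
def Fmap (m : Matrix (Fin p) (Fin p) ℝ × Matrix (Fin p) (Fin p) ℝ) :
    Matrix (Fin p) (Fin p) ℝ := m.1 * m.2 * m.1ᵀ

/-- `m = (U, D)` is an eigen-decomposition of `X`. -/
def IsEigenDecomp (X : Matrix (Fin p) (Fin p) ℝ)
    (m : Matrix (Fin p) (Fin p) ℝ × Matrix (Fin p) (Fin p) ℝ) : Prop :=
  IsM m ∧ Fmap m = X

/-- Geodesic distance on `SO(p)`: `(1/√2)‖Log (U₂ U₁ᵀ)‖_F`, where `Log` denotes a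
minimal-Frobenius-norm skew-symmetric logarithm. -/
noncomputable def dSO (U₁ U₂ : Matrix (Fin p) (Fin p) ℝ) : ℝ :=
  sInf {x : ℝ | ∃ A : Matrix (Fin p) (Fin p) ℝ, Aᵀ = -A ∧
    NormedSpace.exp A = U₂ * U₁ᵀ ∧ x = (1 / Real.sqrt 2) * frobNorm A}

/-- Geodesic distance on `Diag⁺(p)`: `‖Log D₁ − Log D₂‖_F`. -/
noncomputable def dDiag (D₁ D₂ : Matrix (Fin p) (Fin p) ℝ) : ℝ :=
  Real.sqrt (∑ i, (Real.log (D₁ i i) - Real.log (D₂ i i)) ^ 2)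

/-- Geodesic distance on `M(p)` with weight `k` on the rotation part. -/
noncomputable def dM (k : ℝ)
    (m₁ m₂ : Matrix (Fin p) (Fin p) ℝ × Matrix (Fin p) (Fin p) ℝ) : ℝ :=
  Real.sqrt (k * (dSO m₁.1 m₂.1) ^ 2 + (dDiag m₁.2 m₂.2) ^ 2)

/-- Scaling-rotation distance between SPD matrices. -/
noncomputable def dSR (k : ℝ) (X Y : Matrix (Fin p) (Fin p) ℝ) : ℝ :=
  sInf {x : ℝ | ∃ mX mY, IsEigenDecomp X mX ∧ IsEigenDecomp Y mY ∧ x = dM k mX mY}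

/-- Partial scaling-rotation distance. -/
noncomputable def dPSR (k : ℝ) (X : Matrix (Fin p) (Fin p) ℝ)
    (m : Matrix (Fin p) (Fin p) ℝ × Matrix (Fin p) (Fin p) ℝ) : ℝ :=
  sInf {x : ℝ | ∃ mX, IsEigenDecomp X mX ∧ x = dM k mX m}

/-- `P` is a signed permutation matrix. -/
def IsSignedPermMatrix (P : Matrix (Fin p) (Fin p) ℝ) : Prop :=
  ∃ (π : Equiv.Perm (Fin p)) (ε : Fin p → ℝ),
    (∀ i, ε i = 1 ∨ ε i = -1) ∧ ∀ i j, P i j = ε i * (if i = π j then 1 else 0)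

/-- `P` is an even signed permutation matrix (an element of `G(p)`). -/
def IsEvenSignedPerm (P : Matrix (Fin p) (Fin p) ℝ) : Prop :=
  IsSignedPermMatrix P ∧ P.det = 1

/-- `β_{G(p)}`: the minimal rotation distance from the identity to a nonidentity
even signed permutation matrix. -/
noncomputable def betaG (p : ℕ) : ℝ :=
  sInf {x : ℝ | ∃ h : Matrix (Fin p) (Fin p) ℝ, IsEvenSignedPerm h ∧ h ≠ 1 ∧ x = dSO 1 h}

/-- `S` has a repeated eigenvalue (belongs to a lower stratum). -/
def HasRepeatedEig (S : Matrix (Fin p) (Fin p) ℝ) : Prop :=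
  ∃ m, IsEigenDecomp S m ∧ ¬ Function.Injective (fun i => m.2 i i)

/-- `S` has `p` distinct eigenvalues (belongs to the top stratum). -/
def HasDistinctEigs (S : Matrix (Fin p) (Fin p) ℝ) : Prop :=
  ∃ m, IsEigenDecomp S m ∧ Function.Injective (fun i => m.2 i i)

/-- `δ(S)`: scaling-rotation distance from `S` to the lower strata. -/
noncomputable def deltaFun (k : ℝ) (S : Matrix (Fin p) (Fin p) ℝ) : ℝ :=
  sInf {x : ℝ | ∃ S', IsSPD S' ∧ HasRepeatedEig S' ∧ x = dSR k S S'}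

/-- Diameter of `SO(p)` in the rotation distance. -/
noncomputable def diamSO (p : ℕ) : ℝ :=
  sSup {x : ℝ | ∃ U V : Matrix (Fin p) (Fin p) ℝ, IsSO U ∧ IsSO V ∧ x = dSO U V}

-- ===== auxiliary machinery =====

noncomputable def Wmat (σ : Equiv.Perm (Fin p)) (ε : Fin p → ℤˣ) : Matrix (Fin p) (Fin p) ℝ :=
  Matrix.of fun i j => if i = σ j then ((ε j : ℤ) : ℝ) else 0

lemma Wmat_apply (σ : Equiv.Perm (Fin p)) (ε : Fin p → ℤˣ) (i j : Fin p) :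
    Wmat σ ε i j = if i = σ j then ((ε j : ℤ) : ℝ) else 0 := rfl

lemma eps_sq (ε : ℤˣ) : ((ε : ℤ) : ℝ) * ((ε : ℤ) : ℝ) = 1 := by
  rcases Int.units_eq_one_or ε with h | h <;> simp [h]

lemma eps_ne (ε : ℤˣ) : ((ε : ℤ) : ℝ) ≠ 0 := by
  rcases Int.units_eq_one_or ε with h | h <;> simp [h]

lemma Wmat_mul_transpose (σ : Equiv.Perm (Fin p)) (ε : Fin p → ℤˣ) :
    Wmat σ ε * (Wmat σ ε)ᵀ = 1 := by
  ext i k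
  simp only [mul_apply, transpose_apply, Wmat_apply, one_apply]
  rcases eq_or_ne i k with rfl | h
  · simp only [if_pos rfl]
    rw [Finset.sum_eq_single (σ.symm i)]
    · simp [eps_sq]
    · intro j _ hj
      have : i ≠ σ j := fun h => hj (by rw [h, Equiv.symm_apply_apply])
      simp [this]
    · simp
  · rw [if_neg h, Finset.sum_eq_zero]
    intro j _
    rcases eq_or_ne i (σ j) with rfl | h2
    · have hk : k ≠ σ j := fun hh => h (hh ▸ rfl)
      simp [hk]
    · simp [h2]

lemma Wmat_eq (σ : Equiv.Perm (Fin p)) (ε : Fin p → ℤˣ) :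
    Wmat σ ε = (σ⁻¹.permMatrix ℝ) * Matrix.diagonal (fun j => ((ε j : ℤ) : ℝ)) := by
  ext i j
  rw [mul_diagonal]
  simp only [Wmat_apply, Equiv.Perm.permMatrix, PEquiv.toMatrix_apply, Equiv.toPEquiv_apply,
    Option.mem_def, Option.some.injEq]
  rcases eq_or_ne i (σ j) with rfl | h
  · simp
  · rw [if_neg h, if_neg, zero_mul]
    intro hh
    exact h (by rw [← hh]; simp)

lemma Wmat_det (σ : Equiv.Perm (Fin p)) (ε : Fin p → ℤˣ) :
    (Wmat σ ε).det = ((Equiv.Perm.sign σ : ℤ) : ℝ) * ∏ i, ((ε i : ℤ) : ℝ) := by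
  rw [Wmat_eq, det_mul, det_permutation, det_diagonal]
  simp

lemma Wmat_conj (σ : Equiv.Perm (Fin p)) (ε : Fin p → ℤˣ) (d : Fin p → ℝ) :
    Wmat σ ε * Matrix.diagonal (fun j => d (σ j)) * (Wmat σ ε)ᵀ = Matrix.diagonal d := by
  ext i k
  rw [mul_apply]
  simp only [transpose_apply, mul_diagonal]
  rcases eq_or_ne i k with rfl | h
  · rw [diagonal_apply_eq, Finset.sum_eq_single (σ.symm i)]
    · simp only [Wmat_apply, Equiv.apply_symm_apply, if_pos rfl, if_true, eq_self_iff_true]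
      have h2 := eps_sq (ε (σ.symm i))
      linear_combination (d i) * h2
    · intro j _ hj
      have : i ≠ σ j := fun h => hj (by rw [h, Equiv.symm_apply_apply])
      simp [Wmat_apply, this]
    · simp
  · rw [diagonal_apply_ne _ h, Finset.sum_eq_zero]
    intro j _
    rcases eq_or_ne i (σ j) with rfl | h2
    · have hk : k ≠ σ j := fun hh => h (hh ▸ rfl)
      simp [Wmat_apply, hk]
    · simp [Wmat_apply, h2]

section Main
variable (X : Matrix (Fin p) (Fin p) ℝ) (U₀ D₀ : Matrix (Fin p) (Fin p) ℝ)

/-- the parameter set -/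
def SParam (p : ℕ) := {q : Equiv.Perm (Fin p) × (Fin p → ℤˣ) // Equiv.Perm.sign q.1 * ∏ i, q.2 i = 1}

lemma diag_eq {D : Matrix (Fin p) (Fin p) ℝ} (h : D.IsDiag) :
    D = Matrix.diagonal (fun i => D i i) := by
  ext i j
  rcases eq_or_ne i j with rfl | hij
  · simp
  · rw [h hij, diagonal_apply_ne _ hij]

lemma cond_real {σ : Equiv.Perm (Fin p)} {ε : Fin p → ℤˣ}
    (h : Equiv.Perm.sign σ * ∏ i, ε i = 1) :
    ((Equiv.Perm.sign σ : ℤ) : ℝ) * ∏ i, ((ε i : ℤ) : ℝ) = 1 := by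
  have := congrArg (fun u : ℤˣ => ((u : ℤ) : ℝ)) h
  simpa using this

lemma forward_mem (hU₀ : IsSO U₀) (hD₀ : IsDiagPos D₀) (hX : U₀ * D₀ * U₀ᵀ = X)
    (σ : Equiv.Perm (Fin p)) (ε : Fin p → ℤˣ) (h : Equiv.Perm.sign σ * ∏ i, ε i = 1) :
    IsEigenDecomp X (U₀ * Wmat σ ε, Matrix.diagonal (fun j => D₀ (σ j) (σ j))) := by
  have hWWt := Wmat_mul_transpose σ ε
  refine ⟨⟨⟨?_, ?_⟩, ?_, ?_⟩, ?_⟩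
  · rw [transpose_mul]
    calc U₀ * Wmat σ ε * ((Wmat σ ε)ᵀ * U₀ᵀ)
        = U₀ * (Wmat σ ε * (Wmat σ ε)ᵀ) * U₀ᵀ := by simp only [Matrix.mul_assoc]
      _ = 1 := by rw [hWWt, Matrix.mul_one, hU₀.1]
  · rw [det_mul, hU₀.2, one_mul, Wmat_det, cond_real h]
  · exact isDiag_diagonal _
  · intro i
    simpa using hD₀.2 (σ i)
  · show U₀ * Wmat σ ε * Matrix.diagonal _ * (U₀ * Wmat σ ε)ᵀ = X
    rw [transpose_mul, ← hX]
    calc U₀ * Wmat σ ε * Matrix.diagonal (fun j => D₀ (σ j) (σ j)) * ((Wmat σ ε)ᵀ * U₀ᵀ)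
        = U₀ * (Wmat σ ε * Matrix.diagonal (fun j => D₀ (σ j) (σ j)) * (Wmat σ ε)ᵀ) * U₀ᵀ := by
          simp only [Matrix.mul_assoc]
      _ = U₀ * D₀ * U₀ᵀ := by rw [Wmat_conj σ ε (fun i => D₀ i i), ← diag_eq hD₀.1, Matrix.mul_assoc]


lemma U0tU0 (hU₀ : IsSO U₀) : U₀ᵀ * U₀ = 1 := mul_eq_one_comm.mp hU₀.1

lemma forward_inj (hU₀ : IsSO U₀) {σ σ' : Equiv.Perm (Fin p)} {ε ε' : Fin p → ℤˣ}
    (h : U₀ * Wmat σ ε = U₀ * Wmat σ' ε') : σ = σ' ∧ ε = ε' := by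
  have hW : Wmat σ ε = Wmat σ' ε' := by
    have h2 := congrArg (fun M => U₀ᵀ * M) h
    simpa only [← Matrix.mul_assoc, U0tU0 U₀ hU₀, Matrix.one_mul] using h2
  have key : ∀ j, σ j = σ' j ∧ ε j = ε' j := by
    intro j
    have h3 := congrFun (congrFun hW (σ j)) j
    rw [Wmat_apply, Wmat_apply, if_pos rfl] at h3
    by_cases hc : σ j = σ' j
    · rw [if_pos hc] at h3
      refine ⟨hc, Units.ext ?_⟩
      exact_mod_cast h3
    · rw [if_neg hc] at h3
      exact absurd h3 (eps_ne _)
  exact ⟨Equiv.ext fun j => (key j).1, funext fun j => (key j).2⟩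

lemma forward_surj (hU₀ : IsSO U₀) (hD₀ : IsDiagPos D₀) (hX : U₀ * D₀ * U₀ᵀ = X)
    (hinj : Function.Injective fun i => D₀ i i)
    {U D : Matrix (Fin p) (Fin p) ℝ} (h : IsEigenDecomp X (U, D)) :
    ∃ σ ε, (Equiv.Perm.sign σ * ∏ i, ε i = 1) ∧
      U = U₀ * Wmat σ ε ∧ D = Matrix.diagonal (fun j => D₀ (σ j) (σ j)) := by
  obtain ⟨⟨hUSO, hDdiag⟩, hF⟩ := h
  replace hUSO : IsSO U := hUSO
  replace hDdiag : IsDiagPos D := hDdiag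
  replace hF : U * D * Uᵀ = X := hF
  set W := U₀ᵀ * U with hWdef
  have hUUt : U * Uᵀ = 1 := hUSO.1
  have hUtU : Uᵀ * U = 1 := mul_eq_one_comm.mp hUUt
  have hU0tU0 : U₀ᵀ * U₀ = 1 := U0tU0 U₀ hU₀
  have hWWt : W * Wᵀ = 1 := by
    rw [hWdef, transpose_mul, transpose_transpose]
    calc U₀ᵀ * U * (Uᵀ * U₀) = U₀ᵀ * (U * Uᵀ) * U₀ := by simp only [Matrix.mul_assoc]
      _ = 1 := by rw [hUUt, Matrix.mul_one, hU0tU0]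
  have hWtW : Wᵀ * W = 1 := mul_eq_one_comm.mp hWWt
  have hWD : W * D = D₀ * W := by
    have h2 : U * D * Uᵀ = U₀ * D₀ * U₀ᵀ := by rw [hF, ← hX]
    have h3 := congrArg (fun M => U₀ᵀ * M * U) h2
    have e1 : U₀ᵀ * (U * D * Uᵀ) * U = W * D := by
      calc U₀ᵀ * (U * D * Uᵀ) * U = (U₀ᵀ * U) * (D * (Uᵀ * U)) := by simp only [Matrix.mul_assoc]
        _ = W * D := by rw [hUtU, Matrix.mul_one, hWdef]
    have e2 : U₀ᵀ * (U₀ * D₀ * U₀ᵀ) * U = D₀ * W := by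
      calc U₀ᵀ * (U₀ * D₀ * U₀ᵀ) * U = (U₀ᵀ * U₀) * (D₀ * (U₀ᵀ * U)) := by
            simp only [Matrix.mul_assoc]
        _ = D₀ * W := by rw [hU0tU0, Matrix.one_mul, hWdef]
    rw [e1, e2] at h3
    exact h3
  have key : ∀ i j, W i j * D j j = D₀ i i * W i j := by
    intro i j
    have h1 : (W * D) i j = W i j * D j j := by
      rw [mul_apply]
      refine Finset.sum_eq_single j (fun k _ hk => ?_) (by simp)
      rw [hDdiag.1 hk, mul_zero]
    have h2 : (D₀ * W) i j = D₀ i i * W i j := by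
      rw [mul_apply]
      refine Finset.sum_eq_single i (fun k _ hk => ?_) (by simp)
      rw [hD₀.1 (Ne.symm hk), zero_mul]
    rw [← h1, ← h2, hWD]
  have col : ∀ j j', (∑ i, W i j * W i j') = (1 : Matrix (Fin p) (Fin p) ℝ) j j' := by
    intro j j'
    rw [← hWtW, mul_apply]
    simp [transpose_apply]
  have exists_ne : ∀ j, ∃ i, W i j ≠ 0 := by
    intro j
    by_contra hc
    push_neg at hc
    have := col j j
    simp [hc, one_apply] at this
  have uniq : ∀ j i i', W i j ≠ 0 → W i' j ≠ 0 → i = i' := by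
    intro j i i' h1 h2
    have e1 : D j j = D₀ i i := by
      have := key i j
      rw [mul_comm (D₀ i i) _] at this
      exact mul_left_cancel₀ h1 this
    have e2 : D j j = D₀ i' i' := by
      have := key i' j
      rw [mul_comm (D₀ i' i') _] at this
      exact mul_left_cancel₀ h2 this
    exact hinj (show D₀ i i = D₀ i' i' by rw [← e1, e2])
  choose σ₀ hσ₀ using exists_ne
  have zero_off : ∀ j i, i ≠ σ₀ j → W i j = 0 := by
    intro j i hne
    by_contra hc
    exact hne (uniq j i (σ₀ j) hc (hσ₀ j))
  have sq_one : ∀ j, W (σ₀ j) j * W (σ₀ j) j = 1 := by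
    intro j
    have hc := col j j
    rw [Finset.sum_eq_single (σ₀ j) (fun i _ hi => by rw [zero_off j i hi, zero_mul]) (by simp)]
      at hc
    simpa [one_apply] using hc
  have σinj : Function.Injective σ₀ := by
    intro j j' he
    by_contra hne
    have hc := col j j'
    rw [Finset.sum_eq_single (σ₀ j) (fun i _ hi => by rw [zero_off j i hi, zero_mul]) (by simp)]
      at hc
    rw [one_apply_ne hne] at hc
    exact (mul_ne_zero (hσ₀ j) (by rw [he]; exact hσ₀ j')) hc
  let σ : Equiv.Perm (Fin p) := Equiv.ofBijective σ₀ (Finite.injective_iff_bijective.mp σinj)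
  have hσ : ∀ j, σ j = σ₀ j := fun j => rfl
  have hval : ∀ j, W (σ₀ j) j = 1 ∨ W (σ₀ j) j = -1 := fun j => mul_self_eq_one_iff.mp (sq_one j)
  let ε : Fin p → ℤˣ := fun j => if W (σ₀ j) j = 1 then 1 else -1
  have hεcast : ∀ j, ((ε j : ℤ) : ℝ) = W (σ₀ j) j := by
    intro j
    rcases hval j with hh | hh
    · rw [show ε j = 1 from if_pos hh, hh]; simp
    · have hne1 : ¬ (W (σ₀ j) j = 1) := by rw [hh]; norm_num
      rw [show ε j = -1 from if_neg hne1, hh]; simp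
  have hWeq : W = Wmat σ ε := by
    ext i j
    rw [Wmat_apply]
    rcases eq_or_ne i (σ₀ j) with rfl | hne
    · rw [if_pos (hσ j).symm]
      exact (hεcast j).symm
    · rw [if_neg (by rw [hσ j]; exact hne)]
      exact zero_off j i hne
  have hU : U = U₀ * Wmat σ ε := by
    rw [← hWeq, hWdef, ← Matrix.mul_assoc, hU₀.1, Matrix.one_mul]
  have hD : D = Matrix.diagonal (fun j => D₀ (σ j) (σ j)) := by
    ext i j
    rcases eq_or_ne i j with rfl | hne
    · rw [diagonal_apply_eq]
      have hk := key (σ₀ i) i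
      rw [mul_comm (D₀ (σ₀ i) (σ₀ i)) _] at hk
      rw [hσ i]
      exact mul_left_cancel₀ (hσ₀ i) hk
    · rw [diagonal_apply_ne _ hne]
      exact hDdiag.1 hne
  have hdet : (Wmat σ ε).det = 1 := by
    rw [← hWeq, hWdef, det_mul, det_transpose, hU₀.2, hUSO.2, one_mul]
  have hcond : Equiv.Perm.sign σ * ∏ i, ε i = 1 := by
    rw [Wmat_det] at hdet
    have h2 : (((Equiv.Perm.sign σ * ∏ i, ε i : ℤˣ) : ℤ) : ℝ) = 1 := by
      rw [Units.val_mul, Int.cast_mul, ← hdet]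
      congr 1
      push_cast
      ring
    rcases Int.units_eq_one_or (Equiv.Perm.sign σ * ∏ i, ε i) with hu | hu
    · exact hu
    · rw [hu] at h2
      norm_num at h2
  exact ⟨σ, ε, hcond, hU, hD⟩

end Main

lemma card_SParam (p : ℕ) : Nat.card (SParam p) = 2 ^ (p - 1) * Nat.factorial p := by
  rcases p with _ | n
  · haveI : Unique (SParam 0) := {
      default := ⟨(1, fun i => 1), by simp⟩
      uniq := by
        intro q
        apply Subtype.ext
        apply Prod.ext
        · exact Subsingleton.elim _ _
        · funext i
          exact i.elim0 }
    simp [Nat.card_unique]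
  · have e : SParam (n + 1) ≃ Equiv.Perm (Fin (n + 1)) × (Fin n → ℤˣ) := {
      toFun := fun q => (q.1.1, fun i => q.1.2 i.castSucc)
      invFun := fun x => ⟨(x.1, Fin.snoc x.2 ((∏ i, x.2 i)⁻¹ * (Equiv.Perm.sign x.1)⁻¹)), by
        rw [Fin.prod_univ_castSucc]
        simp only [Fin.snoc_castSucc, Fin.snoc_last]
        group⟩
      left_inv := by
        intro q
        apply Subtype.ext
        apply Prod.ext
        · rfl
        · show Fin.snoc (Fin.init q.1.2) _ = q.1.2
          have hc := q.2
          rw [Fin.prod_univ_castSucc] at hc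
          have hlast : q.1.2 (Fin.last n) =
              (∏ i : Fin n, q.1.2 i.castSucc)⁻¹ * (Equiv.Perm.sign q.1.1)⁻¹ := by
            have h4 : ((Equiv.Perm.sign q.1.1) * ∏ i : Fin n, q.1.2 i.castSucc) *
                q.1.2 (Fin.last n) = 1 := by rw [mul_assoc]; exact hc
            have h5 : q.1.2 (Fin.last n) =
                ((Equiv.Perm.sign q.1.1) * ∏ i : Fin n, q.1.2 i.castSucc)⁻¹ :=
              eq_inv_of_mul_eq_one_right h4
            rw [h5, _root_.mul_inv_rev]
          beta_reduce
          rw [← hlast]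
          exact Fin.snoc_init_self q.1.2
      right_inv := by
        intro x
        apply Prod.ext
        · rfl
        · funext i
          simp }
    rw [Nat.card_congr e, Nat.card_prod, Nat.card_eq_fintype_card, Nat.card_eq_fintype_card,
      Fintype.card_perm, Fintype.card_fin, Fintype.card_fun]
    rw [Fintype.card_units_int, Fintype.card_fin, Nat.succ_sub_one]
    ring


/-- An SPD matrix with `p` distinct eigenvalues has exactly
`2^(p-1) * p!` eigen-decompositions; in particular for `p = 2` it has exactly 4. -/
theorem eigenDecomp_count (p : ℕ) (X : Matrix (Fin p) (Fin p) ℝ)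
    (hX : IsSPD X) (hdist : HasDistinctEigs X) :
    Nat.card {m : Matrix (Fin p) (Fin p) ℝ × Matrix (Fin p) (Fin p) ℝ // IsEigenDecomp X m}
        = 2 ^ (p - 1) * Nat.factorial p ∧
    (p = 2 →
      Nat.card {m : Matrix (Fin p) (Fin p) ℝ × Matrix (Fin p) (Fin p) ℝ // IsEigenDecomp X m}
        = 4) := by
  obtain ⟨m₀, ⟨⟨hU₀, hD₀⟩, hF⟩, hinj⟩ := hdist
  have hF' : m₀.1 * m₀.2 * m₀.1ᵀ = X := hF
  have hbij : Function.Bijective (fun q : SParam p =>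
      (⟨(m₀.1 * Wmat q.1.1 q.1.2, Matrix.diagonal fun j => m₀.2 (q.1.1 j) (q.1.1 j)),
        forward_mem X m₀.1 m₀.2 hU₀ hD₀ hF' q.1.1 q.1.2 q.2⟩ :
        {m : Matrix (Fin p) (Fin p) ℝ × Matrix (Fin p) (Fin p) ℝ // IsEigenDecomp X m})) := by
    constructor
    · rintro ⟨⟨σ, ε⟩, hq⟩ ⟨⟨σ', ε'⟩, hq'⟩ he
      simp only [Subtype.mk.injEq, Prod.mk.injEq] at he
      obtain ⟨h1, h2⟩ := forward_inj m₀.1 hU₀ he.1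
      subst h1; subst h2; rfl
    · rintro ⟨⟨U, D⟩, hm⟩
      obtain ⟨σ, ε, hc, hU, hD⟩ := forward_surj X m₀.1 m₀.2 hU₀ hD₀ hF' hinj hm
      exact ⟨⟨(σ, ε), hc⟩, by
        simp only [Subtype.mk.injEq, Prod.mk.injEq]
        exact ⟨hU.symm, hD.symm⟩⟩
  have hcard : Nat.card
      {m : Matrix (Fin p) (Fin p) ℝ × Matrix (Fin p) (Fin p) ℝ // IsEigenDecomp X m}
        = Nat.card (SParam p) :=
    (Nat.card_congr (Equiv.ofBijective _ hbij)).symm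
  refine ⟨?_, ?_⟩
  · rw [hcard, card_SParam]
  · intro hp
    subst hp
    rw [hcard, card_SParam]
    norm_num [Nat.factorial]

end SR
end

section
/- For every X ∈ Sym⁺(p) and every (U,D) ∈ M(p), the partial scaling-rotation distance satisfies d_SR(X, F(U,D)) ≤ d_PSR(X,(U,D)), with equality whenever F(U,D) has p distinct eigenvalues. -/
open scoped BigOperators
open Matrix

namespace SR

variable {p : ℕ}

/-- Orthogonal matrices: transpose commutes. -/
lemma orth_comm {U : Matrix (Fin p) (Fin p) ℝ} (h : U * Uᵀ = 1) : Uᵀ * U = 1 :=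
  mul_eq_one_comm.mp h

/-- Every SPD matrix admits an eigen-decomposition in `M(p)`. -/
lemma exists_eigenDecomp {X : Matrix (Fin p) (Fin p) ℝ} (hX : IsSPD X) :
    ∃ mX, IsEigenDecomp X mX := by
  have hH : X.IsHermitian := hX.2.isHermitian
  set U : Matrix (Fin p) (Fin p) ℝ := (hH.eigenvectorUnitary : Matrix (Fin p) (Fin p) ℝ) with hU
  have hstar : star U = Uᵀ := by
    simp [Matrix.star_eq_conjTranspose, Matrix.conjTranspose, Matrix.map]; rfl
  have hUU : U * Uᵀ = 1 := by
    rw [← hstar]; exact (Matrix.mem_unitaryGroup_iff).mp hH.eigenvectorUnitary.2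
  set D : Matrix (Fin p) (Fin p) ℝ := Matrix.diagonal hH.eigenvalues with hD
  have hspec : X = U * D * Uᵀ := by
    have := hH.spectral_theorem
    rw [Unitary.conjStarAlgAut_apply] at this
    rw [hstar] at this
    simpa [hD] using this
  have hdet2 : U.det * U.det = 1 := by
    have := congrArg Matrix.det hUU
    simpa [Matrix.det_mul, Matrix.det_transpose] using this
  have hdetpm : U.det = 1 ∨ U.det = -1 := mul_self_eq_one_iff.mp hdet2
  -- sign-fixing diagonal matrix
  set ε : Fin p → ℝ := fun i => if (i : ℕ) = 0 then U.det else 1 with hε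
  have hε2 : ∀ i, ε i * ε i = 1 := by
    intro i; by_cases h : (i : ℕ) = 0 <;> simp [hε, h, hdet2]
  set E : Matrix (Fin p) (Fin p) ℝ := Matrix.diagonal ε with hE
  have hEE : E * E = 1 := by
    rw [hE, Matrix.diagonal_mul_diagonal]
    have h1 : (fun i => ε i * ε i) = fun _ => (1 : ℝ) := funext hε2
    rw [h1, Matrix.diagonal_one]
  have hEt : Eᵀ = E := Matrix.diagonal_transpose ε
  refine ⟨(U * E, D), ⟨⟨?_, ?_⟩, ⟨Matrix.isDiag_diagonal _, fun i => by
      simpa [hD] using hX.2.eigenvalues_pos i⟩⟩, ?_⟩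
  · rw [Matrix.transpose_mul, hEt, ← Matrix.mul_assoc, Matrix.mul_assoc U E E, hEE,
      Matrix.mul_one, hUU]
  · rcases Nat.eq_zero_or_pos p with hp | hp
    · subst hp
      simp [Matrix.det_fin_zero]
    · have hdetE : E.det = U.det := by
        rw [hE, Matrix.det_diagonal]
        have h0 : (⟨0, hp⟩ : Fin p) ∈ (Finset.univ : Finset (Fin p)) := Finset.mem_univ _
        rw [← Finset.prod_erase_mul _ _ h0]
        have : ∀ i ∈ Finset.univ.erase (⟨0, hp⟩ : Fin p), ε i = 1 := by
          intro i hi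
          have : i ≠ (⟨0, hp⟩ : Fin p) := (Finset.mem_erase.mp hi).1
          have hne : (i : ℕ) ≠ 0 := by
            intro h; exact this (Fin.ext h)
          simp [hε, hne]
        rw [Finset.prod_congr rfl this]
        simp [hε]
      rw [Matrix.det_mul, hdetE]
      rcases hdetpm with h | h <;> simp [h]
  · show (U * E) * D * (U * E)ᵀ = X
    have hED : E * D = D * E := by
      rw [hE, hD, Matrix.diagonal_mul_diagonal, Matrix.diagonal_mul_diagonal]
      have h1 : (fun i => ε i * hH.eigenvalues i) = fun i => hH.eigenvalues i * ε i :=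
        funext fun i => mul_comm _ _
      rw [h1]
    rw [Matrix.transpose_mul, hEt]
    calc U * E * D * (E * Uᵀ) = U * (E * D * E) * Uᵀ := by
          simp only [Matrix.mul_assoc]
      _ = U * D * Uᵀ := by rw [hED, Matrix.mul_assoc D E E, hEE, Matrix.mul_one]
      _ = X := hspec.symm

/-- Structure of an orthogonal matrix intertwining two diagonals, one with distinct
entries: it is a signed permutation. -/
lemma monomial_structure {V : Matrix (Fin p) (Fin p) ℝ} (hV : V * Vᵀ = 1)
    {d e : Fin p → ℝ} (hinj : Function.Injective d)
    (hcomm : ∀ i j, e i * V i j = V i j * d j) :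
    ∃ σ : Equiv.Perm (Fin p), (∀ i, V i (σ i) * V i (σ i) = 1) ∧
      (∀ i j, j ≠ σ i → V i j = 0) := by
  have hrow : ∀ i i', (∑ j, V i j * V i' j) = if i = i' then 1 else 0 := by
    intro i i'
    have := congrFun (congrFun hV i) i'
    simpa [Matrix.mul_apply, Matrix.transpose_apply, Matrix.one_apply] using this
  have hex : ∀ i, ∃ j, V i j ≠ 0 := by
    intro i
    by_contra h
    push_neg at h
    have := hrow i i
    simp [h] at this
  choose f hf using hex
  have huniq : ∀ i j, V i j ≠ 0 → j = f i := by
    intro i j hj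
    have h1 : e i = d j := by
      have := hcomm i j
      rw [mul_comm (V i j) (d j)] at this
      exact mul_right_cancel₀ hj this
    have h2 : e i = d (f i) := by
      have := hcomm i (f i)
      rw [mul_comm (V i (f i)) (d (f i))] at this
      exact mul_right_cancel₀ (hf i) this
    exact hinj (h1.symm.trans h2)
  have hfinj : Function.Injective f := by
    intro i i' hii'
    by_contra hne
    have := hrow i i'
    rw [if_neg hne] at this
    have hzero : ∀ j ∈ Finset.univ, j ≠ f i → V i j * V i' j = 0 := by
      intro j _ hj
      have : V i j = 0 := by
        by_contra h; exact hj (huniq i j h)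
      rw [this, zero_mul]
    rw [Finset.sum_eq_single_of_mem (f i) (Finset.mem_univ _) hzero] at this
    rw [hii'] at this
    exact (mul_ne_zero (by rw [← hii']; exact hf i) (hf i')) this
  refine ⟨Equiv.ofBijective f (Finite.injective_iff_bijective.mp hfinj), ?_, ?_⟩
  · intro i
    have := hrow i i
    rw [if_pos rfl] at this
    have hzero : ∀ j ∈ Finset.univ, j ≠ f i → V i j * V i j = 0 := by
      intro j _ hj
      have : V i j = 0 := by
        by_contra h; exact hj (huniq i j h)
      rw [this, zero_mul]
    rw [Finset.sum_eq_single_of_mem (f i) (Finset.mem_univ _) hzero] at this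
    exact this
  · intro i j hj
    by_contra h
    exact hj (huniq i j h)

/-- Conjugating a diagonal matrix by a signed permutation matrix permutes the diagonal. -/
lemma conj_diag {V D : Matrix (Fin p) (Fin p) ℝ} (hD : D.IsDiag)
    (σ : Equiv.Perm (Fin p)) (hsq : ∀ i, V i (σ i) * V i (σ i) = 1)
    (hzero : ∀ i j, j ≠ σ i → V i j = 0) :
    Vᵀ * D * V = Matrix.diagonal fun a => D (σ.symm a) (σ.symm a) := by
  ext a b
  have hstep : (Vᵀ * D * V) a b = ∑ j, V j a * D j j * V j b := by
    rw [Matrix.mul_apply]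
    congr 1; funext j
    rw [Matrix.mul_apply]
    rw [Finset.sum_eq_single_of_mem j (Finset.mem_univ _)]
    · rfl
    · intro i _ hij
      rw [hD hij, mul_zero]
  rw [hstep]
  rw [Finset.sum_eq_single_of_mem (σ.symm a) (Finset.mem_univ _)]
  · by_cases hab : a = b
    · subst hab
      have h1 : a = σ (σ.symm a) := (Equiv.apply_symm_apply σ a).symm
      rw [Matrix.diagonal_apply_eq]
      calc V (σ.symm a) a * D (σ.symm a) (σ.symm a) * V (σ.symm a) a
          = V (σ.symm a) a * V (σ.symm a) a * D (σ.symm a) (σ.symm a) := by ring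
        _ = D (σ.symm a) (σ.symm a) := by
            rw [show V (σ.symm a) a = V (σ.symm a) (σ (σ.symm a)) by rw [← h1],
              hsq (σ.symm a), one_mul]
    · have : V (σ.symm a) b = 0 := by
        apply hzero
        rw [Equiv.apply_symm_apply]
        exact fun h => hab h.symm
      rw [this, mul_zero, Matrix.diagonal_apply_ne _ hab]
  · intro j _ hj
    have : V j a = 0 := by
      apply hzero
      intro h
      exact hj (by rw [h, Equiv.symm_apply_apply])
    rw [this, zero_mul, zero_mul]

/-- Conjugation cancellation for the eigen-composition map. -/
lemma conj_F {A V D : Matrix (Fin p) (Fin p) ℝ} (hVV : V * Vᵀ = 1) :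
    (A * V) * (Vᵀ * D * V) * (A * V)ᵀ = A * D * Aᵀ := by
  rw [Matrix.transpose_mul]
  simp only [Matrix.mul_assoc]
  rw [← Matrix.mul_assoc V Vᵀ, hVV, Matrix.one_mul, ← Matrix.mul_assoc V Vᵀ, hVV,
    Matrix.one_mul]

/-- `dSO` is invariant under right multiplication by an orthogonal matrix. -/
lemma dSO_right_invariant {A B V : Matrix (Fin p) (Fin p) ℝ} (hV : V * Vᵀ = 1) :
    dSO (A * V) (B * V) = dSO A B := by
  unfold dSO
  have h : (B * V) * (A * V)ᵀ = B * Aᵀ := by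
    rw [Matrix.transpose_mul, Matrix.mul_assoc, ← Matrix.mul_assoc V Vᵀ Aᵀ, hV, Matrix.one_mul]
  rw [h]

/-- Elements of the `dSR` / `dPSR` defining sets are nonnegative. -/
lemma dM_nonneg (k : ℝ) (m₁ m₂ : Matrix (Fin p) (Fin p) ℝ × Matrix (Fin p) (Fin p) ℝ) :
    0 ≤ dM k m₁ m₂ := Real.sqrt_nonneg _

set_option maxHeartbeats 1600000 in
/-- `d_SR(X, F(U,D)) ≤ d_PSR(X, (U,D))`, with equality whenever `F(U,D)`
has `p` distinct eigenvalues. -/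
theorem dSR_le_dPSR (p : ℕ) (k : ℝ) (hk : 0 < k)
    (X : Matrix (Fin p) (Fin p) ℝ) (hX : IsSPD X)
    (m : Matrix (Fin p) (Fin p) ℝ × Matrix (Fin p) (Fin p) ℝ) (hm : IsM m) :
    dSR k X (Fmap m) ≤ dPSR k X m ∧
      ((Function.Injective fun i => m.2 i i) → dSR k X (Fmap m) = dPSR k X m) := by
    classical
  obtain ⟨mX₀, hmX₀⟩ := exists_eigenDecomp hX
  set SY : Set ℝ := {x : ℝ | ∃ mX mY, IsEigenDecomp X mX ∧ IsEigenDecomp (Fmap m) mY ∧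
    x = dM k mX mY} with hSY
  set SP : Set ℝ := {x : ℝ | ∃ mX, IsEigenDecomp X mX ∧ x = dM k mX m} with hSP
  have hmm : IsEigenDecomp (Fmap m) m := ⟨hm, rfl⟩
  have hsub : SP ⊆ SY := by
    rintro x ⟨mX, hmX, rfl⟩
    exact ⟨mX, m, hmX, hmm, rfl⟩
  have hSPne : SP.Nonempty := ⟨dM k mX₀ m, mX₀, hmX₀, rfl⟩
  have hSYbdd : BddBelow SY := by
    refine ⟨0, ?_⟩
    rintro x ⟨mX, mY, _, _, rfl⟩
    exact dM_nonneg k mX mY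
  have hSPbdd : BddBelow SP := by
    refine ⟨0, ?_⟩
    rintro x ⟨mX, _, rfl⟩
    exact dM_nonneg k mX m
  constructor
  · exact csInf_le_csInf hSYbdd hSPne hsub
  · intro hinj
    refine le_antisymm (csInf_le_csInf hSYbdd hSPne hsub) ?_
    refine le_csInf ⟨dM k mX₀ m, hsub ⟨mX₀, hmX₀, rfl⟩⟩ ?_
    rintro b ⟨mX, mY, hmX, hmY, rfl⟩
    -- construct the transported decomposition
    obtain ⟨V, hVdef⟩ : ∃ V : Matrix (Fin p) (Fin p) ℝ, V = mY.1ᵀ * m.1 := ⟨_, rfl⟩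
    have hY1 : mY.1 * mY.1ᵀ = 1 := hmY.1.1.1
    have hm1 : m.1 * m.1ᵀ = 1 := hm.1.1
    have hY1' : mY.1ᵀ * mY.1 = 1 := orth_comm hY1
    have hm1' : m.1ᵀ * m.1 = 1 := orth_comm hm1
    have hVV : V * Vᵀ = 1 := by
      rw [hVdef, Matrix.transpose_mul, Matrix.transpose_transpose,
        Matrix.mul_assoc, ← Matrix.mul_assoc m.1 m.1ᵀ mY.1, hm1, Matrix.one_mul, hY1']
    have hVV' : Vᵀ * V = 1 := orth_comm hVV
    have hm1V : m.1 = mY.1 * V := by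
      rw [hVdef, ← Matrix.mul_assoc, hY1, Matrix.one_mul]
    -- intertwining relation  mY.2 * V = V * m.2
    have hinter : mY.2 * V = V * m.2 := by
      have hFeq : mY.1 * mY.2 * mY.1ᵀ = m.1 * m.2 * m.1ᵀ := hmY.2.trans rfl
      have := congrArg (fun Z => mY.1ᵀ * Z * m.1) hFeq
      calc mY.2 * V = mY.1ᵀ * (mY.1 * mY.2 * mY.1ᵀ) * m.1 := by
            rw [hVdef]
            simp only [← Matrix.mul_assoc]
            rw [hY1', Matrix.one_mul]
        _ = mY.1ᵀ * (m.1 * m.2 * m.1ᵀ) * m.1 := by rw [hFeq]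
        _ = V * m.2 := by
            rw [hVdef]
            simp only [Matrix.mul_assoc]
            rw [hm1', Matrix.mul_one]
    have hcomm : ∀ i j, mY.2 i i * V i j = V i j * m.2 j j := by
      intro i j
      have h1 : (mY.2 * V) i j = mY.2 i i * V i j := by
        rw [Matrix.mul_apply]
        rw [Finset.sum_eq_single_of_mem i (Finset.mem_univ _)]
        · intro l _ hl
          rw [hmY.1.2.1 (Ne.symm hl), zero_mul]
      have h2 : (V * m.2) i j = V i j * m.2 j j := by
        rw [Matrix.mul_apply]
        rw [Finset.sum_eq_single_of_mem j (Finset.mem_univ _)]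
        · intro l _ hl
          rw [hm.2.1 hl, mul_zero]
      rw [← h1, ← h2, hinter]
    obtain ⟨σ, hsq, hzero⟩ := monomial_structure hVV hinj hcomm
    have hm2V : m.2 = Vᵀ * mY.2 * V := by
      rw [Matrix.mul_assoc, hinter, ← Matrix.mul_assoc, hVV', Matrix.one_mul]
    -- the transported decomposition of X
    set mX' : Matrix (Fin p) (Fin p) ℝ × Matrix (Fin p) (Fin p) ℝ :=
      (mX.1 * V, Vᵀ * mX.2 * V) with hmX'def
    have hdiagX' : Vᵀ * mX.2 * V = Matrix.diagonal fun a => mX.2 (σ.symm a) (σ.symm a) :=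
      conj_diag hmX.1.2.1 σ hsq hzero
    have hdiagm : m.2 = Matrix.diagonal fun a => mY.2 (σ.symm a) (σ.symm a) := by
      rw [hm2V]; exact conj_diag hmY.1.2.1 σ hsq hzero
    have hX1 : mX.1 * mX.1ᵀ = 1 := hmX.1.1.1
    have hmX'ed : IsEigenDecomp X mX' := by
      refine ⟨⟨⟨?_, ?_⟩, ?_⟩, ?_⟩
      · show (mX.1 * V) * (mX.1 * V)ᵀ = 1
        rw [Matrix.transpose_mul, Matrix.mul_assoc, ← Matrix.mul_assoc V Vᵀ mX.1ᵀ, hVV,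
          Matrix.one_mul, hX1]
      · show (mX.1 * V).det = 1
        have hdV : V.det = 1 := by
          rw [hVdef, Matrix.det_mul, Matrix.det_transpose, hmY.1.1.2, hm.1.2, one_mul]
        rw [Matrix.det_mul, hmX.1.1.2, hdV, one_mul]
      · show IsDiagPos (Vᵀ * mX.2 * V)
        rw [hdiagX']
        exact ⟨Matrix.isDiag_diagonal _, fun i => by
          simpa using hmX.1.2.2 (σ.symm i)⟩
      · show (mX.1 * V) * (Vᵀ * mX.2 * V) * (mX.1 * V)ᵀ = X
        rw [conj_F hVV]
        exact hmX.2
    -- distance preservation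
    have hdSO : dSO (mX.1 * V) m.1 = dSO mX.1 mY.1 := by
      rw [hm1V]; exact dSO_right_invariant hVV
    have hdDiag : dDiag (Vᵀ * mX.2 * V) m.2 = dDiag mX.2 mY.2 := by
      unfold dDiag
      rw [hdiagX', hdiagm]
      congr 1
      rw [← Equiv.sum_comp σ.symm
        (fun i => (Real.log (mX.2 i i) - Real.log (mY.2 i i)) ^ 2)]
      congr 1; funext a
      simp
    have hdM : dM k mX' m = dM k mX mY := by
      unfold dM
      rw [show mX'.1 = mX.1 * V from rfl, show mX'.2 = Vᵀ * mX.2 * V from rfl, hdSO, hdDiag]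
    calc sInf SP ≤ dM k mX' m := csInf_le hSPbdd ⟨mX', hmX'ed, rfl⟩
      _ = dM k mX mY := hdM

end SR
end

section
/- If X ∈ Sym⁺(p) has p distinct eigenvalues, then any two distinct eigen-decompositions (U_X,D_X) and (U'_X,D'_X) of X satisfy d_M((U_X,D_X),(U'_X,D'_X)) ≥ √k·β_{G(p)}, where β_{G(p)} is the minimal d_SO-distance from the identity to a nonidentity even signed-permutation matrix. -/
open scoped BigOperators
open Matrix

namespace SR

variable {p : ℕ}

section Auxiliary

variable {q : ℕ}

lemma dSO_nonneg (U V : Matrix (Fin q) (Fin q) ℝ) : 0 ≤ dSO U V := by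
  apply Real.sInf_nonneg
  rintro x ⟨A, -, -, rfl⟩
  have h1 : 0 ≤ (1 : ℝ) / Real.sqrt 2 := by positivity
  have h2 : 0 ≤ frobNorm A := Real.sqrt_nonneg _
  exact mul_nonneg h1 h2

lemma mul_cancel_assoc {M N : Matrix (Fin q) (Fin q) ℝ} (h : M * N = 1)
    (X : Matrix (Fin q) (Fin q) ℝ) : M * (N * X) = X := by
  rw [← Matrix.mul_assoc, h, Matrix.one_mul]

lemma frobNorm_eq_sqrt_trace (A : Matrix (Fin q) (Fin q) ℝ) :
    frobNorm A = Real.sqrt (Matrix.trace (Aᵀ * A)) := by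
  unfold frobNorm
  congr 1
  simp only [Matrix.trace, Matrix.diag, Matrix.mul_apply, Matrix.transpose_apply, sq]
  exact Finset.sum_comm

lemma frobNorm_conj (M A : Matrix (Fin q) (Fin q) ℝ) (hM : M * Mᵀ = 1) :
    frobNorm (Mᵀ * A * M) = frobNorm A := by
  rw [frobNorm_eq_sqrt_trace, frobNorm_eq_sqrt_trace]
  congr 1
  have h1 : (Mᵀ * A * M)ᵀ * (Mᵀ * A * M) = Mᵀ * (Aᵀ * A) * M := by
    simp only [Matrix.transpose_mul, Matrix.transpose_transpose, Matrix.mul_assoc,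
      mul_cancel_assoc hM]
  rw [h1, Matrix.mul_assoc, Matrix.trace_mul_comm, Matrix.mul_assoc, hM, Matrix.mul_one]

lemma dSO_set_subset (M W : Matrix (Fin q) (Fin q) ℝ) (hM : M * Mᵀ = 1) :
    {x : ℝ | ∃ A : Matrix (Fin q) (Fin q) ℝ, Aᵀ = -A ∧
      NormedSpace.exp A = W ∧ x = (1 / Real.sqrt 2) * frobNorm A} ⊆
    {x : ℝ | ∃ A : Matrix (Fin q) (Fin q) ℝ, Aᵀ = -A ∧
      NormedSpace.exp A = Mᵀ * Wᵀ * M ∧ x = (1 / Real.sqrt 2) * frobNorm A} := by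
  have hM' : Mᵀ * M = 1 := mul_eq_one_comm.mp hM
  have hMinv : M⁻¹ = Mᵀ := Matrix.inv_eq_right_inv hM
  have hMunit : IsUnit M := ⟨⟨M, Mᵀ, hM, hM'⟩, rfl⟩
  rintro x ⟨A, hskew, hexp, rfl⟩
  refine ⟨Mᵀ * Aᵀ * M, ?_, ?_, ?_⟩
  · have hA : A = -Aᵀ := by rw [hskew, neg_neg]
    calc (Mᵀ * Aᵀ * M)ᵀ = Mᵀ * A * M := by
          simp only [Matrix.transpose_mul, Matrix.transpose_transpose, Matrix.mul_assoc]
      _ = Mᵀ * (-Aᵀ) * M := by rw [← hA]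
      _ = -(Mᵀ * Aᵀ * M) := by rw [Matrix.mul_neg, Matrix.neg_mul]
  · have : Mᵀ * Aᵀ * M = M⁻¹ * Aᵀ * M := by rw [hMinv]
    rw [this, Matrix.exp_conj' M Aᵀ hMunit, Matrix.exp_transpose, hexp, hMinv]
  · rw [frobNorm_conj M Aᵀ hM, frobNorm_eq_sqrt_trace, frobNorm_eq_sqrt_trace,
      Matrix.transpose_transpose, Matrix.trace_mul_comm]

lemma dSO_set_eq (M W : Matrix (Fin q) (Fin q) ℝ) (hM : M * Mᵀ = 1) :
    {x : ℝ | ∃ A : Matrix (Fin q) (Fin q) ℝ, Aᵀ = -A ∧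
      NormedSpace.exp A = W ∧ x = (1 / Real.sqrt 2) * frobNorm A} =
    {x : ℝ | ∃ A : Matrix (Fin q) (Fin q) ℝ, Aᵀ = -A ∧
      NormedSpace.exp A = Mᵀ * Wᵀ * M ∧ x = (1 / Real.sqrt 2) * frobNorm A} := by
  have hM' : Mᵀ * M = 1 := mul_eq_one_comm.mp hM
  apply Set.Subset.antisymm (dSO_set_subset M W hM)
  have h2 := dSO_set_subset Mᵀ (Mᵀ * Wᵀ * M) hM'
  have hsimp : Mᵀᵀ * (Mᵀ * Wᵀ * M)ᵀ * Mᵀ = W := by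
    simp only [Matrix.transpose_mul, Matrix.transpose_transpose, Matrix.mul_assoc,
      mul_cancel_assoc hM, hM, Matrix.mul_one]
  rwa [hsimp] at h2

/-- Key algebraic lemma: if `R` is orthogonal, `D`, `E` diagonal, `R D = E R`,
and the diagonal of `D` is injective, then `R` is a signed permutation matrix and
the diagonal of `E` is injective. -/
lemma signedPerm_of_orthogonal_conj {R D E : Matrix (Fin q) (Fin q) ℝ}
    (hR : R * Rᵀ = 1) (hD : D.IsDiag) (hE : E.IsDiag)
    (hcomm : R * D = E * R) (hinj : Function.Injective (fun i => D i i)) :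
    IsSignedPermMatrix R ∧ Function.Injective (fun i => E i i) := by
  have key : ∀ i j, R i j ≠ 0 → E i i = D j j := by
    intro i j hij
    have h1 : (R * D) i j = R i j * D j j := by
      rw [Matrix.mul_apply, Finset.sum_eq_single j]
      · intro b _ hb; rw [hD hb, mul_zero]
      · intro h; exact absurd (Finset.mem_univ j) h
    have h2 : (E * R) i j = E i i * R i j := by
      rw [Matrix.mul_apply, Finset.sum_eq_single i]
      · intro b _ hb; rw [hE (Ne.symm hb), zero_mul]
      · intro h; exact absurd (Finset.mem_univ i) h
    have h3 : R i j * D j j = E i i * R i j := by rw [← h1, ← h2, hcomm]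
    have h4 : D j j * R i j = E i i * R i j := by linarith [h3, mul_comm (R i j) (D j j)]
    exact (mul_right_cancel₀ hij h4).symm
  have hrow : ∀ i i', (∑ j, R i j * R i' j) = (1 : Matrix (Fin q) (Fin q) ℝ) i i' := by
    intro i i'
    rw [← hR, Matrix.mul_apply]
    simp [Matrix.transpose_apply]
  have hex : ∀ i, ∃ j, R i j ≠ 0 := by
    intro i
    by_contra h
    push_neg at h
    have := hrow i i
    simp [h, Matrix.one_apply] at this
  have huniq : ∀ i j j', R i j ≠ 0 → R i j' ≠ 0 → j = j' := by
    intro i j j' h h'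
    exact hinj (show D j j = D j' j' by rw [← key i j h, ← key i j' h'])
  choose σ hσ using hex
  have hzero : ∀ i j, j ≠ σ i → R i j = 0 := by
    intro i j hj
    by_contra h
    exact hj (huniq i j (σ i) h (hσ i))
  have hsum : ∀ i, R i (σ i) * R i (σ i) = 1 := by
    intro i
    have h := hrow i i
    rw [Finset.sum_eq_single (σ i)] at h
    · simpa [Matrix.one_apply] using h
    · intro b _ hb; rw [hzero i b hb, zero_mul]
    · intro h'; exact absurd (Finset.mem_univ _) h'
  have hεpm : ∀ i, R i (σ i) = 1 ∨ R i (σ i) = -1 := fun i => mul_self_eq_one_iff.mp (hsum i)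
  have hσinj : Function.Injective σ := by
    intro i i' h
    by_contra hne
    have horth := hrow i i'
    rw [Finset.sum_eq_single (σ i)] at horth
    · rw [Matrix.one_apply_ne hne] at horth
      have hi : R i (σ i) ≠ 0 := hσ i
      have hi' : R i' (σ i) ≠ 0 := by rw [h]; exact hσ i'
      exact mul_ne_zero hi hi' horth
    · intro b _ hb; rw [hzero i b hb, zero_mul]
    · intro h'; exact absurd (Finset.mem_univ _) h'
  have hσbij : Function.Bijective σ := Finite.injective_iff_bijective.mp hσinj
  constructor
  · let eσ : Equiv.Perm (Fin q) := Equiv.ofBijective σ hσbij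
    refine ⟨eσ.symm, fun i => R i (σ i), hεpm, ?_⟩
    intro i j
    by_cases hij : i = eσ.symm j
    · have hj : j = σ i := by
        have := congrArg eσ hij
        rw [Equiv.apply_symm_apply] at this
        exact this.symm
      rw [if_pos hij, mul_one, hj]
    · rw [if_neg hij, mul_zero]
      apply hzero
      intro hjσ
      apply hij
      rw [hjσ]
      exact (Equiv.symm_apply_apply eσ i).symm
  · intro i i' h
    simp only at h
    have h1 : E i i = D (σ i) (σ i) := key i (σ i) (hσ i)
    have h2 : E i' i' = D (σ i') (σ i') := key i' (σ i') (hσ i')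
    exact hσinj (hinj (show D (σ i) (σ i) = D (σ i') (σ i') by rw [← h1, ← h2, h]))

/-- Two eigendecompositions of the same matrix differ by an orthogonal conjugation
intertwining the diagonal parts. -/
lemma eigen_conj {X : Matrix (Fin q) (Fin q) ℝ}
    {ma mb : Matrix (Fin q) (Fin q) ℝ × Matrix (Fin q) (Fin q) ℝ}
    (ha : IsEigenDecomp X ma) (hb : IsEigenDecomp X mb) :
    (mb.1ᵀ * ma.1) * (mb.1ᵀ * ma.1)ᵀ = 1 ∧
    (mb.1ᵀ * ma.1) * ma.2 = mb.2 * (mb.1ᵀ * ma.1) := by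
  obtain ⟨⟨⟨hao, _⟩, _⟩, haF⟩ := ha
  obtain ⟨⟨⟨hbo, _⟩, _⟩, hbF⟩ := hb
  have hao' : ma.1ᵀ * ma.1 = 1 := mul_eq_one_comm.mp hao
  have hbo' : mb.1ᵀ * mb.1 = 1 := mul_eq_one_comm.mp hbo
  have hF : ma.1 * ma.2 * ma.1ᵀ = mb.1 * mb.2 * mb.1ᵀ := haF.trans hbF.symm
  constructor
  · calc (mb.1ᵀ * ma.1) * (mb.1ᵀ * ma.1)ᵀ
        = mb.1ᵀ * ((ma.1 * ma.1ᵀ) * mb.1) := by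
          rw [Matrix.transpose_mul, Matrix.transpose_transpose]
          simp only [Matrix.mul_assoc]
      _ = 1 := by rw [hao, Matrix.one_mul, hbo']
  · calc (mb.1ᵀ * ma.1) * ma.2
        = mb.1ᵀ * (ma.1 * ma.2) := by rw [Matrix.mul_assoc]
      _ = mb.1ᵀ * (ma.1 * ma.2 * (ma.1ᵀ * ma.1)) := by rw [hao', Matrix.mul_one]
      _ = mb.1ᵀ * ((ma.1 * ma.2 * ma.1ᵀ) * ma.1) := by simp only [Matrix.mul_assoc]
      _ = mb.1ᵀ * ((mb.1 * mb.2 * mb.1ᵀ) * ma.1) := by rw [hF]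
      _ = (mb.1ᵀ * mb.1) * (mb.2 * (mb.1ᵀ * ma.1)) := by simp only [Matrix.mul_assoc]
      _ = mb.2 * (mb.1ᵀ * ma.1) := by rw [hbo', Matrix.one_mul]

end Auxiliary

/-- if `X` has `p` distinct eigenvalues, any two distinct
eigen-decompositions of `X` are at `d_M`-distance at least `√k · β_{G(p)}`. -/
theorem distinct_eigendecomp_separation (p : ℕ) (k : ℝ) (hk : 0 < k)
    (X : Matrix (Fin p) (Fin p) ℝ) (hX : IsSPD X) (hdist : HasDistinctEigs X)
    (m₁ m₂ : Matrix (Fin p) (Fin p) ℝ × Matrix (Fin p) (Fin p) ℝ)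
    (h₁ : IsEigenDecomp X m₁) (h₂ : IsEigenDecomp X m₂) (hne : m₁ ≠ m₂) :
    Real.sqrt k * betaG p ≤ dM k m₁ m₂ := by
  obtain ⟨m₀, h₀, hinj₀⟩ := hdist
  -- Transfer injectivity of the diagonal from `m₀` to `m₁`.
  obtain ⟨hR₀o, hR₀c⟩ := eigen_conj h₀ h₁
  have hinj₁ : Function.Injective (fun i => m₁.2 i i) :=
    (signedPerm_of_orthogonal_conj hR₀o h₀.1.2.1 h₁.1.2.1 hR₀c hinj₀).2
  -- The transition matrix between `m₁` and `m₂`.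
  set Q : Matrix (Fin p) (Fin p) ℝ := m₂.1ᵀ * m₁.1 with hQdef
  obtain ⟨hQo, hQc⟩ := eigen_conj h₁ h₂
  have hQsp : IsSignedPermMatrix Q :=
    (signedPerm_of_orthogonal_conj hQo h₁.1.2.1 h₂.1.2.1 hQc hinj₁).1
  have h₁o : m₁.1 * m₁.1ᵀ = 1 := h₁.1.1.1
  have h₂o : m₂.1 * m₂.1ᵀ = 1 := h₂.1.1.1
  have h₂o' : m₂.1ᵀ * m₂.1 = 1 := mul_eq_one_comm.mp h₂o
  have hQdet : Q.det = 1 := by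
    rw [hQdef, Matrix.det_mul, Matrix.det_transpose, h₂.1.1.2, h₁.1.1.2, one_mul]
  have hQne : Q ≠ 1 := by
    intro hQ1
    apply hne
    have hU : m₁.1 = m₂.1 := by
      have : m₂.1 * (m₂.1ᵀ * m₁.1) = m₂.1 * 1 := by rw [← hQdef, hQ1]
      rwa [← Matrix.mul_assoc, h₂o, Matrix.one_mul, Matrix.mul_one] at this
    have hD : m₁.2 = m₂.2 := by
      have h' := hQc
      rw [← hQdef, hQ1, Matrix.one_mul, Matrix.mul_one] at h'
      exact h'
    exact Prod.ext hU hD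
  -- `betaG p ≤ dSO 1 Q`
  have hbdd : BddBelow {x : ℝ | ∃ h : Matrix (Fin p) (Fin p) ℝ,
      IsEvenSignedPerm h ∧ h ≠ 1 ∧ x = dSO 1 h} := by
    refine ⟨0, ?_⟩
    rintro x ⟨h, -, -, rfl⟩
    exact dSO_nonneg 1 h
  have hβ : betaG p ≤ dSO 1 Q :=
    csInf_le hbdd ⟨Q, ⟨hQsp, hQdet⟩, hQne, rfl⟩
  -- `dSO 1 Q = dSO m₁.1 m₂.1`
  have hdSO : dSO m₁.1 m₂.1 = dSO 1 Q := by
    have h2 : m₂.1ᵀ * (m₂.1 * m₁.1ᵀ)ᵀ * m₂.1 = Q := by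
      simp only [hQdef, Matrix.transpose_mul, Matrix.transpose_transpose, Matrix.mul_assoc,
        mul_cancel_assoc h₂o', h₂o', Matrix.mul_one]
    have hsets := dSO_set_eq m₂.1 (m₂.1 * m₁.1ᵀ) h₂o
    simp only [h2] at hsets
    unfold dSO
    simp only [Matrix.transpose_one, Matrix.mul_one]
    exact congrArg sInf hsets
  have hβ' : betaG p ≤ dSO m₁.1 m₂.1 := by rw [hdSO]; exact hβ
  -- Final estimate
  have hd0 : 0 ≤ dSO m₁.1 m₂.1 := dSO_nonneg _ _
  have hkey : Real.sqrt k * betaG p ≤ Real.sqrt k * dSO m₁.1 m₂.1 :=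
    mul_le_mul_of_nonneg_left hβ' (Real.sqrt_nonneg k)
  calc Real.sqrt k * betaG p ≤ Real.sqrt k * dSO m₁.1 m₂.1 := hkey
    _ = Real.sqrt (k * (dSO m₁.1 m₂.1) ^ 2) := by
        rw [Real.sqrt_mul hk.le, Real.sqrt_sq hd0]
    _ ≤ dM k m₁ m₂ := by
        unfold dM
        exact Real.sqrt_le_sqrt (le_add_of_nonneg_right (sq_nonneg _))

end SR
end

section
/- The function δ(S) = inf { d_SR(S, S') : S' ∈ Sym⁺(p) with a repeated eigenvalue } equals min { d_D(D, Λ) : Λ ∈ Diag⁺(p) with a repeated diagonal entry } for any eigen-decomposition (U, D) of S; in particular δ(S) > 0 if and only if S has p distinct eigenvalues. -/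
open scoped BigOperators
open Matrix

namespace SR

variable {p : ℕ}

lemma dSO_self {U : Matrix (Fin p) (Fin p) ℝ} (hU : IsSO U) : dSO U U = 0 := by
  have hmem : (0:ℝ) ∈ {x : ℝ | ∃ A : Matrix (Fin p) (Fin p) ℝ, Aᵀ = -A ∧
      NormedSpace.exp A = U * Uᵀ ∧ x = (1 / Real.sqrt 2) * frobNorm A} := by
    refine ⟨0, by simp, by rw [NormedSpace.exp_zero, hU.1], ?_⟩
    simp [frobNorm]
  have hlb : ∀ x ∈ {x : ℝ | ∃ A : Matrix (Fin p) (Fin p) ℝ, Aᵀ = -A ∧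
      NormedSpace.exp A = U * Uᵀ ∧ x = (1 / Real.sqrt 2) * frobNorm A}, (0:ℝ) ≤ x := by
    rintro x ⟨A, -, -, rfl⟩
    have := Real.sqrt_nonneg (∑ i, ∑ j, (A i j) ^ 2)
    positivity
  exact le_antisymm (csInf_le ⟨0, hlb⟩ hmem) (le_csInf ⟨0, hmem⟩ hlb)

lemma dDiag_nonneg (D₁ D₂ : Matrix (Fin p) (Fin p) ℝ) : 0 ≤ dDiag D₁ D₂ :=
  Real.sqrt_nonneg _

lemma dSR_nonneg (k : ℝ) (X Y : Matrix (Fin p) (Fin p) ℝ) : 0 ≤ dSR k X Y :=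
  Real.sInf_nonneg (by rintro x ⟨mX, mY, -, -, rfl⟩; exact Real.sqrt_nonneg _)

lemma dDiag_le_dM {k : ℝ} (hk : 0 ≤ k)
    (m₁ m₂ : Matrix (Fin p) (Fin p) ℝ × Matrix (Fin p) (Fin p) ℝ) :
    dDiag m₁.2 m₂.2 ≤ dM k m₁ m₂ := by
  have h := dDiag_nonneg m₁.2 m₂.2
  calc dDiag m₁.2 m₂.2 = Real.sqrt ((dDiag m₁.2 m₂.2) ^ 2) := (Real.sqrt_sq h).symm
    _ ≤ dM k m₁ m₂ := Real.sqrt_le_sqrt (by nlinarith [sq_nonneg (dSO m₁.1 m₂.1)])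

lemma abs_div_le_dDiag (E Λ : Matrix (Fin p) (Fin p) ℝ) {a b : Fin p}
    (hab : a ≠ b) (hΛ : Λ a a = Λ b b) :
    |Real.log (E a a) - Real.log (E b b)| / Real.sqrt 2 ≤ dDiag E Λ := by
  set x := Real.log (E a a)
  set y := Real.log (E b b)
  have h1 : (x - y) ^ 2 / 2 ≤ ∑ i, (Real.log (E i i) - Real.log (Λ i i)) ^ 2 := by
    have h2 : ∑ i ∈ ({a, b} : Finset (Fin p)), (Real.log (E i i) - Real.log (Λ i i)) ^ 2
        ≤ ∑ i, (Real.log (E i i) - Real.log (Λ i i)) ^ 2 :=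
      Finset.sum_le_sum_of_subset_of_nonneg (Finset.subset_univ _) fun i _ _ => sq_nonneg _
    rw [Finset.sum_pair hab] at h2
    rw [hΛ] at h2
    nlinarith [sq_nonneg (x + y - 2 * Real.log (Λ b b))]
  calc |x - y| / Real.sqrt 2 = Real.sqrt ((x - y) ^ 2 / 2) := by
        rw [Real.sqrt_div (sq_nonneg _), Real.sqrt_sq_eq_abs]
    _ ≤ dDiag E Λ := Real.sqrt_le_sqrt h1

lemma posdef_conj {U A : Matrix (Fin p) (Fin p) ℝ} (hU : U * Uᵀ = 1) (hA : A.PosDef) :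
    (U * A * Uᵀ).PosDef := by
  have hct : ∀ B : Matrix (Fin p) (Fin p) ℝ, Bᴴ = Bᵀ := fun B => by
    ext i j; simp [Matrix.conjTranspose_apply]
  have hAt : Aᵀ = A := by rw [← hct]; exact hA.1
  refine Matrix.PosDef.of_dotProduct_mulVec_pos ?_ ?_
  · show (U * A * Uᵀ)ᴴ = U * A * Uᵀ
    rw [hct, Matrix.transpose_mul, Matrix.transpose_mul, Matrix.transpose_transpose, hAt,
      Matrix.mul_assoc]
  · intro x hx
    have hy : Uᵀ *ᵥ x ≠ 0 := by
      intro h0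
      apply hx
      have hxx : U *ᵥ (Uᵀ *ᵥ x) = x := by
        rw [Matrix.mulVec_mulVec, hU, Matrix.one_mulVec]
      rw [h0, Matrix.mulVec_zero] at hxx
      exact hxx.symm
    have hpos := hA.dotProduct_mulVec_pos hy
    convert hpos using 1
    simp only [star_trivial]
    rw [← Matrix.mulVec_mulVec, ← Matrix.mulVec_mulVec, Matrix.mulVec_transpose,
      dotProduct_mulVec]

lemma eig_multiset_eq {U D V E : Matrix (Fin p) (Fin p) ℝ}
    (hU : U * Uᵀ = 1) (hV : V * Vᵀ = 1) (hD : D.IsDiag) (hE : E.IsDiag)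
    (h : U * D * Uᵀ = V * E * Vᵀ) :
    Multiset.map (fun i => D i i) Finset.univ.val
      = Multiset.map (fun i => E i i) Finset.univ.val := by
  classical
  have key : ∀ (W F : Matrix (Fin p) (Fin p) ℝ), W * Wᵀ = 1 → F.IsDiag →
      Matrix.det ((Polynomial.X : Polynomial ℝ) • (1 : Matrix (Fin p) (Fin p) (Polynomial ℝ))
        - (W * F * Wᵀ).map Polynomial.C)
      = ∏ i, ((Polynomial.X : Polynomial ℝ) - Polynomial.C (F i i)) := by
    intro W F hW hF
    have hmap1 : (W.map Polynomial.C) * (Wᵀ.map Polynomial.C) = 1 := by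
      rw [← Matrix.map_mul, hW, Matrix.map_one _ (map_zero _) (map_one _)]
    have h1 : (Polynomial.X : Polynomial ℝ) • (1 : Matrix (Fin p) (Fin p) (Polynomial ℝ))
        - (W * F * Wᵀ).map Polynomial.C
        = (W.map Polynomial.C) * ((Polynomial.X : Polynomial ℝ) • 1 - F.map Polynomial.C)
          * (Wᵀ.map Polynomial.C) := by
      rw [Matrix.mul_sub, Matrix.sub_mul]
      congr 1
      · rw [Matrix.mul_smul, Matrix.mul_one, Matrix.smul_mul, hmap1]
      · rw [Matrix.map_mul, Matrix.map_mul]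
    have h2 : (Polynomial.X : Polynomial ℝ) • (1 : Matrix (Fin p) (Fin p) (Polynomial ℝ))
        - F.map Polynomial.C
        = Matrix.diagonal (fun i => (Polynomial.X : Polynomial ℝ) - Polynomial.C (F i i)) := by
      ext i j
      by_cases hij : i = j
      · subst hij; simp
      · simp [Matrix.diagonal_apply_ne _ hij, Matrix.one_apply_ne hij, hF hij]
    rw [h1, Matrix.det_mul, Matrix.det_mul, mul_comm, ← mul_assoc, ← Matrix.det_mul, mul_eq_one_comm.mp hmap1]
    rw [Matrix.det_one, one_mul, h2, Matrix.det_diagonal]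
  have hprod : ∏ i, ((Polynomial.X : Polynomial ℝ) - Polynomial.C (D i i))
      = ∏ i, ((Polynomial.X : Polynomial ℝ) - Polynomial.C (E i i)) := by
    rw [← key U D hU hD, ← key V E hV hE, h]
  have e1 : ∀ (F : Matrix (Fin p) (Fin p) ℝ),
      ∏ i, ((Polynomial.X : Polynomial ℝ) - Polynomial.C (F i i))
      = ((Finset.univ.val.map (fun i => F i i)).map
          (fun a => (Polynomial.X : Polynomial ℝ) - Polynomial.C a)).prod := by
    intro F
    rw [Finset.prod_eq_multiset_prod, Multiset.map_map]
    rfl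
  rw [e1, e1] at hprod
  have := congrArg Polynomial.roots hprod
  rwa [Polynomial.roots_multiset_prod_X_sub_C, Polynomial.roots_multiset_prod_X_sub_C] at this


/-- `δ(S)` equals the minimal `d_D`-distance from the eigenvalue matrix
of any eigen-decomposition of `S` to the diagonal matrices with a repeated entry; in
particular `δ(S) > 0` iff `S` has `p` distinct eigenvalues. -/
theorem deltaFun_eq (p : ℕ) (hp : 2 ≤ p) (k : ℝ) (hk : 0 < k)
    (S : Matrix (Fin p) (Fin p) ℝ) (hS : IsSPD S)
    (m : Matrix (Fin p) (Fin p) ℝ × Matrix (Fin p) (Fin p) ℝ)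
    (hm : IsEigenDecomp S m) :
    deltaFun k S = sInf {x : ℝ | ∃ Λ : Matrix (Fin p) (Fin p) ℝ, IsDiagPos Λ ∧
        (¬ Function.Injective fun i => Λ i i) ∧ x = dDiag m.2 Λ} ∧
    (∃ Λ : Matrix (Fin p) (Fin p) ℝ, IsDiagPos Λ ∧
        (¬ Function.Injective fun i => Λ i i) ∧ dDiag m.2 Λ = deltaFun k S) ∧
    (0 < deltaFun k S ↔ Function.Injective fun i => m.2 i i) := by
  classical
  set d : Fin p → ℝ := fun i => m.2 i i with hd_def
  have hdpos : ∀ i, 0 < d i := hm.1.2.2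
  have hSO_U : IsSO m.1 := hm.1.1
  have h01 : (⟨0, by omega⟩ : Fin p) ≠ ⟨1, by omega⟩ := by simp [Fin.ext_iff]
  have hne : (Finset.univ.offDiag : Finset (Fin p × Fin p)).Nonempty :=
    ⟨(⟨0, by omega⟩, ⟨1, by omega⟩),
      Finset.mem_offDiag.mpr ⟨Finset.mem_univ _, Finset.mem_univ _, h01⟩⟩
  set f : Fin p × Fin p → ℝ :=
    fun q => |Real.log (d q.1) - Real.log (d q.2)| / Real.sqrt 2 with hf_def
  set c : ℝ := Finset.univ.offDiag.inf' hne f with hc_def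
  have hc_le : ∀ a b : Fin p, a ≠ b →
      c ≤ |Real.log (d a) - Real.log (d b)| / Real.sqrt 2 := by
    intro a b hab
    have hmem : (a, b) ∈ Finset.univ.offDiag :=
      Finset.mem_offDiag.mpr ⟨Finset.mem_univ _, Finset.mem_univ _, hab⟩
    exact Finset.inf'_le f hmem
  obtain ⟨q, hq_mem, hq_eq⟩ := Finset.exists_mem_eq_inf' hne f
  obtain ⟨i, j⟩ := q
  have hij : i ≠ j := (Finset.mem_offDiag.mp hq_mem).2.2
  have hc_eq : c = |Real.log (d i) - Real.log (d j)| / Real.sqrt 2 := hq_eq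
  have hc0 : 0 ≤ c := by rw [hc_eq]; positivity
  -- the minimizing Λ
  set g : Fin p → ℝ := fun t =>
    if t = i ∨ t = j then Real.exp ((Real.log (d i) + Real.log (d j)) / 2) else d t with hg_def
  set Λs : Matrix (Fin p) (Fin p) ℝ := Matrix.diagonal g with hΛs_def
  have hgpos : ∀ t, 0 < g t := by
    intro t
    by_cases h : t = i ∨ t = j
    · simp only [hg_def, if_pos h]; exact Real.exp_pos _
    · simp only [hg_def, if_neg h]; exact hdpos t
  have hΛs_pos : IsDiagPos Λs := by
    refine ⟨Matrix.isDiag_diagonal g, fun t => ?_⟩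
    rw [hΛs_def, Matrix.diagonal_apply_eq]
    exact hgpos t
  have hΛs_ninj : ¬ Function.Injective fun t => Λs t t := by
    intro hinj
    have heq : (fun t => Λs t t) i = (fun t => Λs t t) j := by
      simp [hΛs_def, Matrix.diagonal_apply_eq, hg_def]
    exact hij (hinj heq)
  have hΛs_val : dDiag m.2 Λs = c := by
    have hsum : ∑ t, (Real.log (m.2 t t) - Real.log (Λs t t)) ^ 2
        = (Real.log (d i) - Real.log (d j)) ^ 2 / 2 := by
      rw [← Finset.sum_subset (Finset.subset_univ ({i, j} : Finset (Fin p)))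
        (fun t _ ht => ?_)]
      · rw [Finset.sum_pair hij]
        have hgi : Λs i i = Real.exp ((Real.log (d i) + Real.log (d j)) / 2) := by
          simp [hΛs_def, Matrix.diagonal_apply_eq, hg_def]
        have hgj : Λs j j = Real.exp ((Real.log (d i) + Real.log (d j)) / 2) := by
          simp [hΛs_def, Matrix.diagonal_apply_eq, hg_def]
        rw [hgi, hgj, Real.log_exp]
        have hdi : m.2 i i = d i := rfl
        have hdj : m.2 j j = d j := rfl
        rw [hdi, hdj]
        ring
      · have ht' : ¬(t = i ∨ t = j) := by simpa using ht
        have hgt : Λs t t = d t := by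
          simp only [hΛs_def, Matrix.diagonal_apply_eq, hg_def, if_neg ht']
        have hdt : m.2 t t = d t := rfl
        rw [hgt, hdt, sub_self]
        simp
    show Real.sqrt _ = c
    rw [hsum, Real.sqrt_div (sq_nonneg _), Real.sqrt_sq_eq_abs, hc_eq]
  -- general pair bound
  have pairE : ∀ E : Matrix (Fin p) (Fin p) ℝ,
      Multiset.map (fun t => E t t) Finset.univ.val = Multiset.map d Finset.univ.val →
      ∀ a b : Fin p, a ≠ b →
      c ≤ |Real.log (E a a) - Real.log (E b b)| / Real.sqrt 2 := by
    intro E hmeq a b hab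
    rcases le_or_gt c 0 with hcle | hcpos
    · exact hcle.trans (by positivity)
    · have hdinj : Function.Injective d := by
        intro x y hxy
        by_contra hxyne
        have h1 := hc_le x y hxyne
        rw [hxy, sub_self, abs_zero, zero_div] at h1
        exact absurd (hcpos.trans_le h1) (lt_irrefl 0)
      have h1 : (Finset.univ.val.map d).Nodup := Finset.univ.nodup.map hdinj
      have h2 : (Finset.univ.val.map (fun t => E t t)).Nodup := by rw [hmeq]; exact h1
      have hEne : E a a ≠ E b b := by
        intro hEq
        exact hab (Multiset.inj_on_of_nodup_map h2 a (Finset.mem_val.mpr (Finset.mem_univ a))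
          b (Finset.mem_val.mpr (Finset.mem_univ b)) hEq)
      have hma : E a a ∈ Finset.univ.val.map d := by
        rw [← hmeq]; exact Multiset.mem_map_of_mem _ (Finset.mem_val.mpr (Finset.mem_univ a))
      have hmb : E b b ∈ Finset.univ.val.map d := by
        rw [← hmeq]; exact Multiset.mem_map_of_mem _ (Finset.mem_val.mpr (Finset.mem_univ b))
      obtain ⟨x, -, hx⟩ := Multiset.mem_map.mp hma
      obtain ⟨y, -, hy⟩ := Multiset.mem_map.mp hmb
      have hxy : x ≠ y := by
        intro hxx
        exact hEne (by rw [← hx, ← hy, hxx])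
      calc c ≤ |Real.log (d x) - Real.log (d y)| / Real.sqrt 2 := hc_le x y hxy
        _ = _ := by rw [hx, hy]
  have dDiag_ge' : ∀ (E Λ : Matrix (Fin p) (Fin p) ℝ),
      Multiset.map (fun t => E t t) Finset.univ.val = Multiset.map d Finset.univ.val →
      (¬ Function.Injective fun t => Λ t t) → c ≤ dDiag E Λ := by
    intro E Λ hmeq hninj
    obtain ⟨a, b, hΛab, hab⟩ := Function.not_injective_iff.mp hninj
    exact (pairE E hmeq a b hab).trans (abs_div_le_dDiag E Λ hab hΛab)
  have hmeqS : ∀ mX, IsEigenDecomp S mX →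
      Multiset.map (fun t => mX.2 t t) Finset.univ.val = Multiset.map d Finset.univ.val := by
    intro mX hmX
    exact eig_multiset_eq hmX.1.1.1 hSO_U.1 hmX.1.2.1 hm.1.2.1
      (by simpa [Fmap] using hmX.2.trans hm.2.symm)
  have hninjT : ∀ (Λ' Λ₀ : Matrix (Fin p) (Fin p) ℝ),
      Multiset.map (fun t => Λ' t t) Finset.univ.val
        = Multiset.map (fun t => Λ₀ t t) Finset.univ.val →
      (¬ Function.Injective fun t => Λ₀ t t) → ¬ Function.Injective fun t => Λ' t t := by
    intro Λ' Λ₀ hmeq hninj hinj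
    apply hninj
    have h1 : (Finset.univ.val.map (fun t => Λ' t t)).Nodup := Finset.univ.nodup.map hinj
    rw [hmeq] at h1
    intro x y hxy
    exact Multiset.inj_on_of_nodup_map h1 x (Finset.mem_val.mpr (Finset.mem_univ x))
      y (Finset.mem_val.mpr (Finset.mem_univ y)) hxy
  have hdSR_ge : ∀ S' : Matrix (Fin p) (Fin p) ℝ, HasRepeatedEig S' → c ≤ dSR k S S' := by
    intro S' hrep
    obtain ⟨m₀, hm₀, hninj₀⟩ := hrep
    refine le_csInf ⟨dM k m m₀, m, m₀, hm, hm₀, rfl⟩ ?_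
    rintro x ⟨mX, mY, hmX, hmY, rfl⟩
    have e1 := hmeqS mX hmX
    have e2 : Multiset.map (fun t => mY.2 t t) Finset.univ.val
        = Multiset.map (fun t => m₀.2 t t) Finset.univ.val :=
      eig_multiset_eq hmY.1.1.1 hm₀.1.1.1 hmY.1.2.1 hm₀.1.2.1
        (by simpa [Fmap] using hmY.2.trans hm₀.2.symm)
    have hninjY := hninjT mY.2 m₀.2 e2 hninj₀
    exact (dDiag_ge' mX.2 mY.2 e1 hninjY).trans (dDiag_le_dM hk.le mX mY)
  -- the witness SPD matrix
  set Ss : Matrix (Fin p) (Fin p) ℝ := m.1 * Λs * m.1ᵀ with hSs_def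
  have hdecs : IsEigenDecomp Ss (m.1, Λs) := ⟨⟨hSO_U, hΛs_pos⟩, rfl⟩
  have hSs_SPD : IsSPD Ss := by
    constructor
    · show Ssᵀ = Ss
      rw [hSs_def, Matrix.transpose_mul, Matrix.transpose_mul, Matrix.transpose_transpose,
        (Matrix.isDiag_diagonal g).isSymm, Matrix.mul_assoc]
    · have hΛsPD : Λs.PosDef := by
        rw [hΛs_def]; exact Matrix.PosDef.diagonal hgpos
      exact posdef_conj hSO_U.1 hΛsPD
  have hrepSs : HasRepeatedEig Ss := ⟨(m.1, Λs), hdecs, hΛs_ninj⟩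
  have hdSR_le : dSR k S Ss ≤ c := by
    have hmem : dM k m (m.1, Λs) ∈ {x : ℝ | ∃ mX mY, IsEigenDecomp S mX ∧
        IsEigenDecomp Ss mY ∧ x = dM k mX mY} := ⟨m, (m.1, Λs), hm, hdecs, rfl⟩
    have hbdd : BddBelow {x : ℝ | ∃ mX mY, IsEigenDecomp S mX ∧
        IsEigenDecomp Ss mY ∧ x = dM k mX mY} :=
      ⟨0, by rintro x ⟨_, _, _, _, rfl⟩; exact Real.sqrt_nonneg _⟩
    have hval : dM k m (m.1, Λs) = c := by
      show Real.sqrt (k * (dSO m.1 m.1) ^ 2 + (dDiag m.2 Λs) ^ 2) = c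
      rw [dSO_self hSO_U, hΛs_val]
      rw [show k * (0:ℝ) ^ 2 + c ^ 2 = c ^ 2 by ring, Real.sqrt_sq hc0]
    calc dSR k S Ss ≤ dM k m (m.1, Λs) := csInf_le hbdd hmem
      _ = c := hval
  have hdelta_le : deltaFun k S ≤ c := by
    have hbdd : BddBelow {x : ℝ | ∃ S', IsSPD S' ∧ HasRepeatedEig S' ∧ x = dSR k S S'} :=
      ⟨0, by rintro x ⟨S', -, -, rfl⟩; exact dSR_nonneg k S S'⟩
    exact (csInf_le hbdd ⟨Ss, hSs_SPD, hrepSs, rfl⟩).trans hdSR_le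
  have hdelta_ge : c ≤ deltaFun k S :=
    le_csInf ⟨dSR k S Ss, Ss, hSs_SPD, hrepSs, rfl⟩
      (by rintro x ⟨S', hS', hrep, rfl⟩; exact hdSR_ge S' hrep)
  have hdelta : deltaFun k S = c := le_antisymm hdelta_le hdelta_ge
  have hRHS : sInf {x : ℝ | ∃ Λ : Matrix (Fin p) (Fin p) ℝ, IsDiagPos Λ ∧
      (¬ Function.Injective fun t => Λ t t) ∧ x = dDiag m.2 Λ} = c := by
    apply le_antisymm
    · exact csInf_le ⟨0, by rintro x ⟨Λ, -, -, rfl⟩; exact dDiag_nonneg _ _⟩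
        ⟨Λs, hΛs_pos, hΛs_ninj, hΛs_val.symm⟩
    · refine le_csInf ⟨dDiag m.2 Λs, Λs, hΛs_pos, hΛs_ninj, rfl⟩ ?_
      rintro x ⟨Λ, hΛ, hninj, rfl⟩
      exact dDiag_ge' m.2 Λ rfl hninj
  refine ⟨by rw [hdelta, hRHS], ⟨Λs, hΛs_pos, hΛs_ninj, by rw [hΛs_val, hdelta]⟩, ?_⟩
  rw [hdelta]
  constructor
  · intro hcpos a b hab2
    by_contra hne2
    have h1 := hc_le a b hne2
    have hdd : d a = d b := hab2
    rw [hdd, sub_self, abs_zero, zero_div] at h1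
    exact absurd (hcpos.trans_le h1) (lt_irrefl 0)
  · intro hinj
    rw [hc_eq]
    have hdne : d i ≠ d j := fun h => hij (hinj h)
    have hlog : Real.log (d i) ≠ Real.log (d j) := fun h =>
      hdne (Real.log_injOn_pos (Set.mem_Ioi.mpr (hdpos i)) (Set.mem_Ioi.mpr (hdpos j)) h)
    have habs : 0 < |Real.log (d i) - Real.log (d j)| := abs_pos.mpr (sub_ne_zero.mpr hlog)
    positivity

end SR
end
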